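/- With the reflected n-ary code val as above, for any t ∈ {0,…,n-1}^d with val(t) < n^d - 1, the vector t' with val(t') = val(t) + 1 differs from t in exactly one coordinate, and in that coordinate it differs by exactly 1 (i.e., |tᵢ - t'ᵢ| = 1 for the unique differing index i). -/

import Mathlib

def grayVal (n d : ℕ) (t : Fin d → Fin n) : ℕ :=
  ∑ i : Fin d,
    (if Even (∑ j ∈ Finset.univ.filter (fun j => i < j), (t j : ℕ))
      then (t i : ℕ) else n - 1 - (t i : ℕ)) * n ^ (i : ℕ)

lemma geom_aux (n : ℕ) (hn : 1 ≤ n) : ∀ d, ∑ i : Fin d, (n-1) * n^(i:ℕ) = n^d - 1 := by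
  intro d
  induction d with
  | zero => simp
  | succ d ih =>
    rw [Fin.sum_univ_castSucc]
    simp only [Fin.coe_castSucc, Fin.val_last, ih]
    have h1 : 1 ≤ n^d := Nat.one_le_pow _ _ hn
    have h2 : (n-1) * n^d = n^(d+1) - n^d := by
      rw [Nat.sub_mul, one_mul, pow_succ, mul_comm]
    have h3 : n^d ≤ n^(d+1) := Nat.pow_le_pow_right hn (by omega)
    omega

lemma grayVal_le (n d : ℕ) (hn : 1 ≤ n) (t : Fin d → Fin n) :
    grayVal n d t ≤ n^d - 1 := by
  rw [← geom_aux n hn d]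
  apply Finset.sum_le_sum
  intro i _
  apply Nat.mul_le_mul_right
  have : (t i : ℕ) < n := (t i).is_lt
  split <;> omega

lemma gray_inner_sum (n d : ℕ) (t : Fin (d+1) → Fin n) (i : Fin d) :
    (∑ j ∈ Finset.univ.filter (fun j => i.castSucc < j), (t j : ℕ))
      = (∑ j ∈ Finset.univ.filter (fun j => i < j), ((Fin.init t) j : ℕ))
        + (t (Fin.last d) : ℕ) := by
  rw [Finset.sum_filter, Finset.sum_filter, Fin.sum_univ_castSucc]
  simp [Fin.castSucc_lt_castSucc_iff, Fin.castSucc_lt_last, Fin.init]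

lemma grayVal_rec (n d : ℕ) (hn : 1 ≤ n) (t : Fin (d+1) → Fin n) :
    grayVal n (d+1) t =
      (if Even (t (Fin.last d) : ℕ) then grayVal n d (Fin.init t)
        else n^d - 1 - grayVal n d (Fin.init t)) + (t (Fin.last d) : ℕ) * n^d := by
  unfold grayVal
  rw [Fin.sum_univ_castSucc]
  have hlast : (Finset.univ.filter (fun j => Fin.last d < j)) = (∅ : Finset (Fin (d+1))) := by
    ext j; simp [not_lt.mpr (Fin.le_last j)]
  rw [hlast]
  simp only [Finset.sum_empty, Even.zero, if_true, Fin.val_last]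
  congr 1
  have hstep : ∀ i : Fin d,
      (if Even (∑ j ∈ Finset.univ.filter (fun j => i.castSucc < j), (t j : ℕ))
        then (t i.castSucc : ℕ) else n - 1 - (t i.castSucc : ℕ)) * n ^ (i.castSucc : ℕ)
      = (if Even ((∑ j ∈ Finset.univ.filter (fun j => i < j), ((Fin.init t) j : ℕ))
            + (t (Fin.last d) : ℕ))
          then ((Fin.init t) i : ℕ) else n - 1 - ((Fin.init t) i : ℕ)) * n ^ (i : ℕ) := by
    intro i
    rw [gray_inner_sum, Fin.coe_castSucc]
    rfl
  rw [Finset.sum_congr rfl (fun i _ => hstep i)]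
  by_cases htl : Even (t (Fin.last d) : ℕ)
  · rw [if_pos htl]
    apply Finset.sum_congr rfl
    intro i _
    congr 1
    simp [Nat.even_add, htl]
  · rw [if_neg htl]
    have key : (∑ i : Fin d,
        (if Even ((∑ j ∈ Finset.univ.filter (fun j => i < j), ((Fin.init t) j : ℕ))
            + (t (Fin.last d) : ℕ))
          then ((Fin.init t) i : ℕ) else n - 1 - ((Fin.init t) i : ℕ)) * n ^ (i : ℕ))
        + grayVal n d (Fin.init t) = n^d - 1 := by
      unfold grayVal
      rw [← Finset.sum_add_distrib, ← geom_aux n hn d]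
      apply Finset.sum_congr rfl
      intro i _
      rw [← add_mul]
      congr 1
      have hti : ((Fin.init t) i : ℕ) < n := ((Fin.init t) i).is_lt
      by_cases hS : Even (∑ j ∈ Finset.univ.filter (fun j => i < j), ((Fin.init t) j : ℕ))
      · rw [if_neg (by simp [Nat.even_add, hS, htl]), if_pos hS]; omega
      · rw [if_pos (by simp [Nat.even_add, hS, htl]), if_neg hS]; omega
    have hle := grayVal_le n d hn (Fin.init t)
    unfold grayVal at key hle
    omega

lemma split_unique {a a' b b' N : ℕ} (hN : 0 < N) (ha : a < N) (ha' : a' < N)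
    (h : a + b * N = a' + b' * N) : a = a' ∧ b = b' := by
  have h1 : (a + b * N) % N = a := by simp [Nat.mod_eq_of_lt ha]
  have h2 : (a' + b' * N) % N = a' := by simp [Nat.mod_eq_of_lt ha']
  have h3 : (a + b * N) / N = b := by rw [Nat.add_mul_div_right _ _ hN, Nat.div_eq_of_lt ha]; omega
  have h4 : (a' + b' * N) / N = b' := by rw [Nat.add_mul_div_right _ _ hN, Nat.div_eq_of_lt ha']; omega
  exact ⟨by rw [← h1, ← h2, h], by rw [← h3, ← h4, h]⟩

lemma grayVal_injective (n : ℕ) (hn : 1 ≤ n) :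
    ∀ d (t t' : Fin d → Fin n), grayVal n d t = grayVal n d t' → t = t' := by
  intro d
  induction d with
  | zero => intro t t' _; funext i; exact absurd i.is_lt (by omega)
  | succ d ih =>
    intro t t' h
    rw [grayVal_rec n d hn t, grayVal_rec n d hn t'] at h
    have hN : 0 < n^d := Nat.pow_pos (by omega)
    have hg := grayVal_le n d hn (Fin.init t)
    have hg' := grayVal_le n d hn (Fin.init t')
    have hlow : (if Even (t (Fin.last d) : ℕ) then grayVal n d (Fin.init t)
        else n^d - 1 - grayVal n d (Fin.init t)) < n^d := by split <;> omega
    have hlow' : (if Even (t' (Fin.last d) : ℕ) then grayVal n d (Fin.init t')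
        else n^d - 1 - grayVal n d (Fin.init t')) < n^d := by split <;> omega
    obtain ⟨heq, hteq⟩ := split_unique hN hlow hlow' h
    have hlast : t (Fin.last d) = t' (Fin.last d) := Fin.ext hteq
    have hinit : Fin.init t = Fin.init t' := by
      apply ih
      rw [hteq] at heq
      by_cases hp : Even (t' (Fin.last d) : ℕ)
      · rw [if_pos hp, if_pos hp] at heq; exact heq
      · rw [if_neg hp, if_neg hp] at heq; omega
    funext i
    rcases Fin.eq_castSucc_or_eq_last i with ⟨j, rfl⟩ | rfl
    · exact congrFun hinit j
    · exact hlast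

lemma gray_aux (n : ℕ) (hn : 2 ≤ n) : ∀ d (t t' : Fin d → Fin n),
    grayVal n d t' = grayVal n d t + 1 →
    ∃ i : Fin d, (∀ j : Fin d, j ≠ i → t j = t' j) ∧
      (((t i : ℤ) - (t' i : ℤ) = 1) ∨ ((t' i : ℤ) - (t i : ℤ) = 1)) := by
  intro d
  induction d with
  | zero => intro t t' h; simp [grayVal] at h
  | succ d ih =>
    intro t t' h
    have hn1 : 1 ≤ n := by omega
    rw [grayVal_rec n d hn1 t, grayVal_rec n d hn1 t'] at h
    have hN : 0 < n^d := Nat.pow_pos (by omega)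
    have hg := grayVal_le n d hn1 (Fin.init t)
    have hg' := grayVal_le n d hn1 (Fin.init t')
    set g := grayVal n d (Fin.init t) with hgdef
    set g' := grayVal n d (Fin.init t') with hgdef'
    set tl := (t (Fin.last d) : ℕ) with htldef
    set tl' := (t' (Fin.last d) : ℕ) with htldef'
    have hlow : (if Even tl then g else n^d - 1 - g) < n^d := by split <;> omega
    have hlow' : (if Even tl' then g' else n^d - 1 - g') < n^d := by split <;> omega
    by_cases hb : (if Even tl then g else n^d - 1 - g) + 1 < n^d
    · -- same top digit, lower part increments
      have h' : (if Even tl' then g' else n^d - 1 - g')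
          + tl' * n^d = ((if Even tl then g else n^d - 1 - g) + 1) + tl * n^d := by omega
      obtain ⟨heq, hteq⟩ := split_unique hN hlow' hb h'
      by_cases hp : Even tl
      · have hp' : Even tl' := hteq ▸ hp
        rw [if_pos hp', if_pos hp] at heq
        obtain ⟨i, hforall, hdiff⟩ := ih (Fin.init t) (Fin.init t') heq
        refine ⟨i.castSucc, ?_, hdiff⟩
        intro j hj
        rcases Fin.eq_castSucc_or_eq_last j with ⟨k, rfl⟩ | rfl
        · exact hforall k (by simpa using hj)
        · have hv : tl = tl' := hteq.symm
          rw [htldef, htldef'] at hv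
          exact Fin.ext hv
      · have hp' : ¬ Even tl' := hteq ▸ hp
        rw [if_neg hp', if_neg hp] at heq
        have heq2 : g = g' + 1 := by omega
        obtain ⟨i, hforall, hdiff⟩ := ih (Fin.init t') (Fin.init t) heq2
        refine ⟨i.castSucc, ?_, by tauto⟩
        intro j hj
        rcases Fin.eq_castSucc_or_eq_last j with ⟨k, rfl⟩ | rfl
        · exact (hforall k (by simpa using hj)).symm
        · have hv : tl = tl' := hteq.symm
          rw [htldef, htldef'] at hv
          exact Fin.ext hv
    · -- boundary: top digit increments
      have hbe : (if Even tl then g else n^d - 1 - g) = n^d - 1 := by omega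
      have hring : (tl + 1) * n^d = tl * n^d + n^d := by ring
      have h' : (if Even tl' then g' else n^d - 1 - g') + tl' * n^d = 0 + (tl + 1) * n^d := by
        omega
      obtain ⟨heq, hteq⟩ := split_unique hN hlow' hN h'
      have hginit : Fin.init t = Fin.init t' := by
        apply grayVal_injective n hn1
        by_cases hp : Even tl
        · have hp' : ¬ Even tl' := by rw [hteq]; simp [Nat.even_add_one, hp]
          rw [if_pos hp] at hbe
          rw [if_neg hp'] at heq
          omega
        · have hp' : Even tl' := by rw [hteq]; simpa [Nat.even_add_one] using hp
          rw [if_neg hp] at hbe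
          rw [if_pos hp'] at heq
          omega
      refine ⟨Fin.last d, ?_, ?_⟩
      · intro j hj
        rcases Fin.eq_castSucc_or_eq_last j with ⟨k, rfl⟩ | rfl
        · exact congrFun hginit k
        · exact absurd rfl hj
      · right
        have : (tl' : ℤ) = (tl : ℤ) + 1 := by exact_mod_cast hteq
        omega

theorem grayVal_succ_adjacent (n d : ℕ) (hn : 2 ≤ n) (hd : 1 ≤ d)
    (t t' : Fin d → Fin n)
    (hsucc : grayVal n d t' = grayVal n d t + 1)
    (hlt : grayVal n d t + 1 < n ^ d) :
    ∃ i : Fin d, (∀ j : Fin d, j ≠ i → t j = t' j) ∧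
      (((t i : ℤ) - (t' i : ℤ) = 1) ∨ ((t' i : ℤ) - (t i : ℤ) = 1)) :=
  gray_aux n hn d t t' hsucc
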